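/- arXiv:2007.07953 — 7 statements merged into one kernel-verified Lean document; each statement's English description precedes it below -/
import Mathlib

section
/- Let d, q be positive integers, let D be a real d × q matrix, ν ∈ ℝ^d, λ̄ ≥ 0, γ̄ ≥ 0, and define f(η) = (1/2)‖η − ν‖₂² + λ̄‖Dᵀη‖₂ + γ̄‖η‖₂. Let P : ℝ^d → ℝ^d be the orthogonal projection onto the orthogonal complement of the column space of D. Suppose there exists w ∈ ℝ^q with ‖w‖₂ ≤ λ̄ and Dw = ν − Pν. Then the vector η̂ = max(1 − γ̄/‖Pν‖₂, 0) · Pν (interpreted as η̂ = 0 when Pν = 0) is a global minimizer of f over ℝ^d. -/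
/-- Euclidean (ℓ₂) norm of a finitely indexed real vector. -/
noncomputable def l2norm {ι : Type*} [Fintype ι] (v : ι → ℝ) : ℝ :=
  Real.sqrt (∑ i, (v i) ^ 2)

lemma l2norm_nonneg' {ι : Type*} [Fintype ι] (v : ι → ℝ) : 0 ≤ l2norm v :=
  Real.sqrt_nonneg _

lemma l2norm_sq' {ι : Type*} [Fintype ι] (v : ι → ℝ) :
    (l2norm v) ^ 2 = ∑ i, (v i) ^ 2 :=
  Real.sq_sqrt (Finset.sum_nonneg fun i _ => sq_nonneg _)

lemma l2norm_smul' {ι : Type*} [Fintype ι] (c : ℝ) (hc : 0 ≤ c) (v : ι → ℝ) :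
    l2norm (c • v) = c * l2norm v := by
  unfold l2norm
  have h : ∑ i, ((c • v) i) ^ 2 = c ^ 2 * ∑ i, (v i) ^ 2 := by
    rw [Finset.mul_sum]
    exact Finset.sum_congr rfl fun i _ => by simp [Pi.smul_apply, smul_eq_mul]; ring
  rw [h, Real.sqrt_mul (sq_nonneg c), Real.sqrt_sq hc]

lemma l2norm_zero' {ι : Type*} [Fintype ι] : l2norm (0 : ι → ℝ) = 0 := by
  simp [l2norm]

lemma cs_ineq' {ι : Type*} [Fintype ι] (x y : ι → ℝ) :
    ∑ i, x i * y i ≤ l2norm x * l2norm y := by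
  have h := Finset.sum_mul_sq_le_sq_mul_sq Finset.univ x y
  have h2 : l2norm x * l2norm y = Real.sqrt ((∑ i, x i ^ 2) * ∑ i, y i ^ 2) := by
    rw [l2norm, l2norm, ← Real.sqrt_mul (Finset.sum_nonneg fun i _ => sq_nonneg _)]
  rw [h2]
  calc ∑ i, x i * y i ≤ |∑ i, x i * y i| := le_abs_self _
    _ = Real.sqrt ((∑ i, x i * y i) ^ 2) := (Real.sqrt_sq_eq_abs _).symm
    _ ≤ Real.sqrt ((∑ i, x i ^ 2) * ∑ i, y i ^ 2) := Real.sqrt_le_sqrt h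


/-- Part (ii) of the closed-form proximal solution.  `P` is the orthogonal
projection onto the orthogonal complement of the column space of `D`
(characterized by: `Dᵀ(P v) = 0`, i.e. `P v ⟂ col(D)`, and `v − P v ∈ col(D)`).
If some `w` with `‖w‖₂ ≤ λ̄` satisfies `D w = ν − P ν`, then
`η̂ = max(1 − γ̄/‖Pν‖₂, 0) · Pν` globally minimizes
`f(η) = (1/2)‖η − ν‖₂² + λ̄‖Dᵀη‖₂ + γ̄‖η‖₂`. -/
theorem prox_projection_solution
    (d q : ℕ) (hd : 0 < d) (hq : 0 < q)
    (D : Matrix (Fin d) (Fin q) ℝ) (ν : Fin d → ℝ)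
    (lamBar gamBar : ℝ) (hlam : 0 ≤ lamBar) (hgam : 0 ≤ gamBar)
    (f : (Fin d → ℝ) → ℝ)
    (hf : ∀ η, f η = (1 / 2) * (l2norm (fun i => η i - ν i)) ^ 2
        + lamBar * l2norm (D.transpose.mulVec η) + gamBar * l2norm η)
    (P : (Fin d → ℝ) → (Fin d → ℝ))
    (hPperp : ∀ v, D.transpose.mulVec (P v) = 0)
    (hPcol : ∀ v, ∃ u : Fin q → ℝ, D.mulVec u = v - P v)
    (w : Fin q → ℝ) (hw : l2norm w ≤ lamBar) (hDw : D.mulVec w = ν - P ν) :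
    ∀ η, f (max (1 - gamBar / l2norm (P ν)) 0 • P ν) ≤ f η := by
  intro η
  set p : Fin d → ℝ := P ν with hp
  set s : ℝ := l2norm p with hs
  have hs0 : 0 ≤ s := l2norm_nonneg' p
  set c : ℝ := max (1 - gamBar / s) 0 with hc
  have hc0 : 0 ≤ c := le_max_right _ _
  have hc1 : c ≤ 1 := by
    apply max_le _ zero_le_one
    have : 0 ≤ gamBar / s := div_nonneg hgam hs0
    linarith
  set ηh : Fin d → ℝ := c • p with hηh
  set g : Fin d → ℝ := (1 - c) • p with hg
  -- key scalar facts
  have hgle : (1 - c) * s ≤ gamBar := by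
    rcases eq_or_lt_of_le hs0 with h0 | hpos
    · rw [← h0]; simpa using hgam
    · rcases le_or_gt (1 - gamBar / s) 0 with hle | hlt
      · have hcz : c = 0 := max_eq_right hle
        rw [hcz]
        have : 1 ≤ gamBar / s := by linarith
        calc (1 - 0) * s = s := by ring
          _ ≤ gamBar := (one_le_div hpos).mp this
      · have hcz : c = 1 - gamBar / s := max_eq_left hlt.le
        rw [hcz]
        field_simp
        linarith
    -- end
  have hkey : gamBar * (c * s) = c * (1 - c) * s ^ 2 := by
    rcases eq_or_lt_of_le hs0 with h0 | hpos
    · rw [← h0]; ring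
    · rcases le_or_gt (1 - gamBar / s) 0 with hle | hlt
      · have hcz : c = 0 := max_eq_right hle
        rw [hcz]; ring
      · have hcz : c = 1 - gamBar / s := max_eq_left hlt.le
        have : (1 - c) * s = gamBar := by
          rw [hcz]; field_simp; ring
        nlinarith [this]
  -- norms of ηh and g
  have hηhnorm : l2norm ηh = c * s := l2norm_smul' c hc0 p
  have hgnorm : l2norm g = (1 - c) * s := l2norm_smul' (1 - c) (by linarith) p
  -- Dᵀ ηh = 0
  have hDηh : D.transpose.mulVec ηh = 0 := by
    rw [hηh, Matrix.mulVec_smul, hp, hPperp, smul_zero]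
  -- adjoint identity
  have hadj : ∀ u : Fin d → ℝ, ∑ i, D.mulVec w i * u i = ∑ j, w j * D.transpose.mulVec u j := by
    intro u
    simp only [Matrix.mulVec, dotProduct, Matrix.transpose_apply,
      Finset.sum_mul, Finset.mul_sum]
    rw [Finset.sum_comm]
    exact Finset.sum_congr rfl fun j _ => Finset.sum_congr rfl fun i _ => by ring
  -- inequality B for η
  have hB : ∑ i, D.mulVec w i * η i ≤ lamBar * l2norm (D.transpose.mulVec η) := by
    rw [hadj]
    calc ∑ j, w j * D.transpose.mulVec η j ≤ l2norm w * l2norm (D.transpose.mulVec η) :=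
          cs_ineq' _ _
      _ ≤ lamBar * l2norm (D.transpose.mulVec η) :=
          mul_le_mul_of_nonneg_right hw (l2norm_nonneg' _)
  -- Dw ⬝ ηh = 0
  have hBh : ∑ i, D.mulVec w i * ηh i = 0 := by
    rw [hadj, hDηh]; simp
  -- inequality C for η
  have hC : ∑ i, g i * η i ≤ gamBar * l2norm η := by
    calc ∑ i, g i * η i ≤ l2norm g * l2norm η := cs_ineq' _ _
      _ ≤ gamBar * l2norm η := by
          apply mul_le_mul_of_nonneg_right _ (l2norm_nonneg' _)
          rw [hgnorm]; exact hgle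
  -- equality C for ηh
  have hCh : ∑ i, g i * ηh i = gamBar * l2norm ηh := by
    have : ∑ i, g i * ηh i = c * (1 - c) * ∑ i, (p i) ^ 2 := by
      rw [Finset.mul_sum]
      exact Finset.sum_congr rfl fun i _ => by
        simp [hg, hηh, Pi.smul_apply, smul_eq_mul]; ring
    rw [this, ← l2norm_sq', hηhnorm, ← hs, hkey]
  -- quadratic expansion
  have hA : (1 / 2) * (l2norm (fun i => η i - ν i)) ^ 2
      ≥ (1 / 2) * (l2norm (fun i => ηh i - ν i)) ^ 2
        + ∑ i, (ηh i - ν i) * (η i - ηh i) := by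
    rw [l2norm_sq', l2norm_sq']
    have hexp : ∑ i, (η i - ν i) ^ 2
        = ∑ i, ((ηh i - ν i) ^ 2 + 2 * ((ηh i - ν i) * (η i - ηh i)) + (η i - ηh i) ^ 2) :=
      Finset.sum_congr rfl fun i _ => by ring
    rw [hexp, Finset.sum_add_distrib, Finset.sum_add_distrib, ← Finset.mul_sum]
    have hnn : 0 ≤ ∑ i, (η i - ηh i) ^ 2 := Finset.sum_nonneg fun i _ => sq_nonneg _
    linarith
  -- stationarity
  have hstat : ∑ i, (ηh i - ν i) * (η i - ηh i) + ∑ i, D.mulVec w i * (η i - ηh i)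
      + ∑ i, g i * (η i - ηh i) = 0 := by
    rw [← Finset.sum_add_distrib, ← Finset.sum_add_distrib]
    apply Finset.sum_eq_zero
    intro i _
    have hDwi : D.mulVec w i = ν i - p i := by
      have := congrFun hDw i
      simpa [hp] using this
    have hηhi : ηh i = c * p i := rfl
    have hgi : g i = (1 - c) * p i := rfl
    rw [hDwi, hηhi, hgi]; ring
  -- split stationarity sums
  have hsplit1 : ∑ i, D.mulVec w i * (η i - ηh i)
      = ∑ i, D.mulVec w i * η i - ∑ i, D.mulVec w i * ηh i := by
    rw [← Finset.sum_sub_distrib]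
    exact Finset.sum_congr rfl fun i _ => by ring
  have hsplit2 : ∑ i, g i * (η i - ηh i) = ∑ i, g i * η i - ∑ i, g i * ηh i := by
    rw [← Finset.sum_sub_distrib]
    exact Finset.sum_congr rfl fun i _ => by ring
  -- assemble
  rw [hf, hf]
  have hηhfun : (fun i => ηh i - ν i) = (fun i => (ηh : Fin d → ℝ) i - ν i) := rfl
  have hDηhnorm : l2norm (D.transpose.mulVec ηh) = 0 := by rw [hDηh]; exact l2norm_zero'
  have hηnorm0 : 0 ≤ l2norm (D.transpose.mulVec η) := l2norm_nonneg' _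
  rw [hDηhnorm]
  rw [hsplit1, hsplit2] at hstat
  rw [hBh] at hstat
  linarith [hA, hB, hC, hCh]
end

section
/- Let ν = (ν₁, ν₂, ν₃, ν₄) ∈ ℝ⁴, let d = (1, −1, −1, 1) ∈ ℝ⁴, let λ̄ > 0 and γ̄ ≥ 0, and set ν̈ = ν₁ − ν₂ − ν₃ + ν₄. Define η̂₀ ∈ ℝ⁴ by: η̂₀ = (ν₁ − ν̈/4, ν₂ + ν̈/4, ν₃ + ν̈/4, ν₄ − ν̈/4) if |ν̈| ≤ 4λ̄; η̂₀ = (ν₁ − λ̄, ν₂ + λ̄, ν₃ + λ̄, ν₄ − λ̄) if ν̈ > 4λ̄; and η̂₀ = (ν₁ + λ̄, ν₂ − λ̄, ν₃ − λ̄, ν₄ + λ̄) if ν̈ < −4λ̄. Then η̂ = max(1 − γ̄/‖η̂₀‖₂, 0) · η̂₀ (interpreted as 0 when η̂₀ = 0) is the unique global minimizer over ℝ⁴ of f(η) = (1/2)‖η − ν‖₂² + λ̄|⟨d, η⟩| + γ̄‖η‖₂. In particular, taking γ̄ = 0, η̂₀ is the unique global minimizer of η ↦ (1/2)‖η − ν‖₂²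 + λ̄|⟨d, η⟩|. -/
set_option maxHeartbeats 1000000

private lemma l2norm_sq4 (w : Fin 4 → ℝ) :
    (l2norm w)^2 = w 0^2 + w 1^2 + w 2^2 + w 3^2 := by
  rw [l2norm, Real.sq_sqrt (by positivity), Fin.sum_univ_four]

private lemma l2norm_def4 (w : Fin 4 → ℝ) :
    l2norm w = Real.sqrt (w 0^2 + w 1^2 + w 2^2 + w 3^2) := by
  rw [l2norm, Fin.sum_univ_four]

private lemma cs4 (u v : Fin 4 → ℝ) (hu : u 0^2+u 1^2+u 2^2+u 3^2 ≤ 1) :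
    u 0*v 0+u 1*v 1+u 2*v 2+u 3*v 3 ≤ Real.sqrt (v 0^2+v 1^2+v 2^2+v 3^2) := by
  have hv : (0:ℝ) ≤ v 0^2+v 1^2+v 2^2+v 3^2 := by positivity
  have hs := Real.sqrt_nonneg (v 0^2+v 1^2+v 2^2+v 3^2)
  rcases le_or_gt (u 0*v 0+u 1*v 1+u 2*v 2+u 3*v 3) 0 with h | h
  · linarith
  · have h2 : (u 0*v 0+u 1*v 1+u 2*v 2+u 3*v 3)^2 ≤ v 0^2+v 1^2+v 2^2+v 3^2 := by
      nlinarith [sq_nonneg (u 0*v 1 - u 1*v 0), sq_nonneg (u 0*v 2 - u 2*v 0),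
        sq_nonneg (u 0*v 3 - u 3*v 0), sq_nonneg (u 1*v 2 - u 2*v 1),
        sq_nonneg (u 1*v 3 - u 3*v 1), sq_nonneg (u 2*v 3 - u 3*v 2), hv]
    calc u 0*v 0+u 1*v 1+u 2*v 2+u 3*v 3
        = Real.sqrt ((u 0*v 0+u 1*v 1+u 2*v 2+u 3*v 3)^2) := (Real.sqrt_sq h.le).symm
      _ ≤ _ := Real.sqrt_le_sqrt h2

/-- Master optimality lemma: a subgradient certificate at `ηh` makes `ηh` the
unique global minimizer. -/
private lemma master (lam gam : ℝ) (hlam : 0 ≤ lam) (hgam : 0 ≤ gam)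
    (ν : Fin 4 → ℝ) (f : (Fin 4 → ℝ) → ℝ)
    (hf : ∀ η : Fin 4 → ℝ, f η = (1/2)*((η 0 - ν 0)^2+(η 1 - ν 1)^2+(η 2 - ν 2)^2+(η 3 - ν 3)^2)
        + lam*|η 0 - η 1 - η 2 + η 3| + gam*Real.sqrt (η 0^2+η 1^2+η 2^2+η 3^2))
    (s : ℝ) (hs : |s| ≤ 1) (ηh u : Fin 4 → ℝ)
    (hd0 : ν 0 = ηh 0 + lam*s + gam*u 0)
    (hd1 : ν 1 = ηh 1 - lam*s + gam*u 1)
    (hd2 : ν 2 = ηh 2 - lam*s + gam*u 2)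
    (hd3 : ν 3 = ηh 3 + lam*s + gam*u 3)
    (hu : u 0^2+u 1^2+u 2^2+u 3^2 ≤ 1)
    (hueq : gam*(u 0*ηh 0+u 1*ηh 1+u 2*ηh 2+u 3*ηh 3)
        = gam*Real.sqrt (ηh 0^2+ηh 1^2+ηh 2^2+ηh 3^2))
    (hseq : s*(ηh 0 - ηh 1 - ηh 2 + ηh 3) = |ηh 0 - ηh 1 - ηh 2 + ηh 3|) :
    (∀ η, f ηh ≤ f η) ∧ (∀ η, (∀ η', f η ≤ f η') → η = ηh) := by
  have key : ∀ η : Fin 4 → ℝ, f ηh +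
      (1/2)*((η 0-ηh 0)^2+(η 1-ηh 1)^2+(η 2-ηh 2)^2+(η 3-ηh 3)^2) ≤ f η := by
    intro η
    have hA : lam * (s*(η 0 - η 1 - η 2 + η 3)) ≤ lam * |η 0 - η 1 - η 2 + η 3| := by
      apply mul_le_mul_of_nonneg_left _ hlam
      calc s*(η 0 - η 1 - η 2 + η 3) ≤ |s*(η 0 - η 1 - η 2 + η 3)| := le_abs_self _
        _ = |s| * |η 0 - η 1 - η 2 + η 3| := abs_mul _ _
        _ ≤ 1 * |η 0 - η 1 - η 2 + η 3| := mul_le_mul_of_nonneg_right hs (abs_nonneg _)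
        _ = _ := one_mul _
    have hB : gam * (u 0*η 0+u 1*η 1+u 2*η 2+u 3*η 3)
        ≤ gam * Real.sqrt (η 0^2+η 1^2+η 2^2+η 3^2) :=
      mul_le_mul_of_nonneg_left (cs4 u η hu) hgam
    have hAh : lam * (s*(ηh 0 - ηh 1 - ηh 2 + ηh 3)) = lam * |ηh 0 - ηh 1 - ηh 2 + ηh 3| := by
      rw [hseq]
    rw [hf ηh, hf η, hd0, hd1, hd2, hd3]
    linarith [hA, hB, hAh, hueq]
  constructor
  · intro η
    have := key η
    nlinarith [sq_nonneg (η 0-ηh 0), sq_nonneg (η 1-ηh 1), sq_nonneg (η 2-ηh 2),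
      sq_nonneg (η 3-ηh 3)]
  · intro η hmin
    have h1 := hmin ηh
    have h2 := key η
    have e0 : η 0 = ηh 0 := by
      nlinarith [sq_nonneg (η 0-ηh 0), sq_nonneg (η 1-ηh 1), sq_nonneg (η 2-ηh 2),
        sq_nonneg (η 3-ηh 3)]
    have e1 : η 1 = ηh 1 := by
      nlinarith [sq_nonneg (η 0-ηh 0), sq_nonneg (η 1-ηh 1), sq_nonneg (η 2-ηh 2),
        sq_nonneg (η 3-ηh 3)]
    have e2 : η 2 = ηh 2 := by
      nlinarith [sq_nonneg (η 0-ηh 0), sq_nonneg (η 1-ηh 1), sq_nonneg (η 2-ηh 2),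
        sq_nonneg (η 3-ηh 3)]
    have e3 : η 3 = ηh 3 := by
      nlinarith [sq_nonneg (η 0-ηh 0), sq_nonneg (η 1-ηh 1), sq_nonneg (η 2-ηh 2),
        sq_nonneg (η 3-ηh 3)]
    funext i
    fin_cases i
    · exact e0
    · exact e1
    · exact e2
    · exact e3

/-- Closed-form proximal solution in the bivariate binary case `J = K = 2`,
where the log-odds constraint matrix reduces to the single column
`d = (1,−1,−1,1)ᵀ`.  With `ν̈ = ν₁ − ν₂ − ν₃ + ν₄` and `η̂₀` defined piecewise,
`η̂ = max(1 − γ̄/‖η̂₀‖₂, 0)·η̂₀` is the unique global minimizer of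
`f(η) = (1/2)‖η − ν‖₂² + λ̄|⟨d,η⟩| + γ̄‖η‖₂`; in particular (`γ̄ = 0`),
`η̂₀` is the unique global minimizer of `g(η) = (1/2)‖η − ν‖₂² + λ̄|⟨d,η⟩|`. -/
theorem prox_binary_bivariate_solution
    (ν : Fin 4 → ℝ) (lamBar gamBar : ℝ) (hlam : 0 < lamBar) (hgam : 0 ≤ gamBar)
    (nudd : ℝ) (hnudd : nudd = ν 0 - ν 1 - ν 2 + ν 3)
    (f g : (Fin 4 → ℝ) → ℝ)
    (hf : ∀ η, f η = (1 / 2) * (l2norm (fun i => η i - ν i)) ^ 2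
        + lamBar * |η 0 - η 1 - η 2 + η 3| + gamBar * l2norm η)
    (hg : ∀ η, g η = (1 / 2) * (l2norm (fun i => η i - ν i)) ^ 2
        + lamBar * |η 0 - η 1 - η 2 + η 3|)
    (η₀ : Fin 4 → ℝ)
    (hη₀ : η₀ = if |nudd| ≤ 4 * lamBar then
        ![ν 0 - nudd / 4, ν 1 + nudd / 4, ν 2 + nudd / 4, ν 3 - nudd / 4]
      else if nudd > 4 * lamBar then
        ![ν 0 - lamBar, ν 1 + lamBar, ν 2 + lamBar, ν 3 - lamBar]
      else
        ![ν 0 + lamBar, ν 1 - lamBar, ν 2 - lamBar, ν 3 + lamBar])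
    (ηhat : Fin 4 → ℝ)
    (hηhat : ηhat = max (1 - gamBar / l2norm η₀) 0 • η₀) :
    ((∀ η, f ηhat ≤ f η) ∧ (∀ η, (∀ η', f η ≤ f η') → η = ηhat)) ∧
    ((∀ η, g η₀ ≤ g η) ∧ (∀ η, (∀ η', g η ≤ g η') → η = η₀)) := by
  have hf' : ∀ η : Fin 4 → ℝ, f η =
      (1/2)*((η 0 - ν 0)^2+(η 1 - ν 1)^2+(η 2 - ν 2)^2+(η 3 - ν 3)^2)
      + lamBar*|η 0 - η 1 - η 2 + η 3| + gamBar*Real.sqrt (η 0^2+η 1^2+η 2^2+η 3^2) := by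
    intro η
    rw [hf η, l2norm_sq4, l2norm_def4 η]
  have hg' : ∀ η : Fin 4 → ℝ, g η =
      (1/2)*((η 0 - ν 0)^2+(η 1 - ν 1)^2+(η 2 - ν 2)^2+(η 3 - ν 3)^2)
      + lamBar*|η 0 - η 1 - η 2 + η 3| + 0*Real.sqrt (η 0^2+η 1^2+η 2^2+η 3^2) := by
    intro η
    rw [hg η, l2norm_sq4]
    ring_nf
  -- the dual scalar `s` and the structure of `η₀`
  have hlam4 : (0:ℝ) < 4*lamBar := by linarith
  set s : ℝ := if |nudd| ≤ 4*lamBar then nudd/(4*lamBar) else if nudd > 4*lamBar then 1 else -1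
    with hs_def
  have hη₀c : η₀ 0 = ν 0 - lamBar*s ∧ η₀ 1 = ν 1 + lamBar*s ∧ η₀ 2 = ν 2 + lamBar*s ∧
      η₀ 3 = ν 3 - lamBar*s ∧ |s| ≤ 1 ∧
      s * (η₀ 0 - η₀ 1 - η₀ 2 + η₀ 3) = |η₀ 0 - η₀ 1 - η₀ 2 + η₀ 3| := by
    by_cases hc1 : |nudd| ≤ 4*lamBar
    · have hsv : s = nudd/(4*lamBar) := by rw [hs_def, if_pos hc1]
      have hls : lamBar * s = nudd/4 := by rw [hsv]; field_simp
      have h0 : η₀ 0 = ν 0 - nudd/4 := by rw [hη₀]; simp [hc1]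
      have h1 : η₀ 1 = ν 1 + nudd/4 := by rw [hη₀]; simp [hc1]
      have h2 : η₀ 2 = ν 2 + nudd/4 := by rw [hη₀]; simp [hc1]
      have h3 : η₀ 3 = ν 3 - nudd/4 := by rw [hη₀]; simp [hc1]
      have habs : |s| ≤ 1 := by
        rw [hsv, abs_div, abs_of_pos hlam4, div_le_one hlam4]
        exact hc1
      have hdot : η₀ 0 - η₀ 1 - η₀ 2 + η₀ 3 = 0 := by rw [h0,h1,h2,h3]; rw [hnudd] at *; ring
      exact ⟨by rw [h0, hls], by rw [h1, hls], by rw [h2, hls], by rw [h3, hls], habs,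
        by rw [hdot]; simp⟩
    · by_cases hc2 : nudd > 4*lamBar
      · have hsv : s = 1 := by rw [hs_def, if_neg hc1, if_pos hc2]
        have h0 : η₀ 0 = ν 0 - lamBar := by rw [hη₀]; simp [hc1, hc2]
        have h1 : η₀ 1 = ν 1 + lamBar := by rw [hη₀]; simp [hc1, hc2]
        have h2 : η₀ 2 = ν 2 + lamBar := by rw [hη₀]; simp [hc1, hc2]
        have h3 : η₀ 3 = ν 3 - lamBar := by rw [hη₀]; simp [hc1, hc2]
        have hdot : η₀ 0 - η₀ 1 - η₀ 2 + η₀ 3 = nudd - 4*lamBar := by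
          rw [h0,h1,h2,h3,hnudd]; ring
        refine ⟨by rw [h0, hsv]; ring, by rw [h1, hsv]; ring, by rw [h2, hsv]; ring,
          by rw [h3, hsv]; ring, by rw [hsv]; norm_num, ?_⟩
        rw [hsv, hdot, abs_of_pos (by linarith)]; ring
      · have hsv : s = -1 := by rw [hs_def, if_neg hc1, if_neg hc2]
        have hc1' : 4*lamBar < |nudd| := not_le.mp hc1
        have hc2' : nudd ≤ 4*lamBar := not_lt.mp hc2
        have hneg : nudd < -(4*lamBar) := by
          rcases lt_abs.mp hc1' with h | h
          · linarith
          · linarith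
        have h0 : η₀ 0 = ν 0 + lamBar := by rw [hη₀]; simp [hc1, hc2]
        have h1 : η₀ 1 = ν 1 - lamBar := by rw [hη₀]; simp [hc1, hc2]
        have h2 : η₀ 2 = ν 2 - lamBar := by rw [hη₀]; simp [hc1, hc2]
        have h3 : η₀ 3 = ν 3 + lamBar := by rw [hη₀]; simp [hc1, hc2]
        have hdot : η₀ 0 - η₀ 1 - η₀ 2 + η₀ 3 = nudd + 4*lamBar := by
          rw [h0,h1,h2,h3,hnudd]; ring
        refine ⟨by rw [h0, hsv]; ring, by rw [h1, hsv]; ring, by rw [h2, hsv]; ring,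
          by rw [h3, hsv]; ring, by rw [hsv]; norm_num, ?_⟩
        rw [hsv, hdot, abs_of_neg (by linarith)]; ring
  obtain ⟨h0, h1, h2, h3, hsabs, hseq0⟩ := hη₀c
  -- the shrinkage factor `c` and the dual vector `u`
  set r : ℝ := l2norm η₀ with hr_def
  set c : ℝ := max (1 - gamBar / r) 0 with hc_def
  have hηhi : ∀ i, ηhat i = c * η₀ i := by
    intro i; rw [hηhat]; simp [Pi.smul_apply, smul_eq_mul]
  have hrnn : 0 ≤ r := by rw [hr_def, l2norm_def4]; positivity
  have hr2 : r^2 = η₀ 0^2+η₀ 1^2+η₀ 2^2+η₀ 3^2 := by rw [hr_def]; exact l2norm_sq4 η₀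
  have hcnn : 0 ≤ c := le_max_right _ _
  have hr0 : r = 0 → ∀ i, η₀ i = 0 := by
    intro h i
    have h1' : Real.sqrt (∑ j, η₀ j ^2) = 0 := h
    have h2' : (∑ j, η₀ j ^2) = 0 := by
      have hnn : (0:ℝ) ≤ ∑ j, η₀ j ^2 := by positivity
      nlinarith [Real.sq_sqrt hnn, h1']
    have h3' := (Finset.sum_eq_zero_iff_of_nonneg
      (fun j _ => sq_nonneg (η₀ j))).mp h2' i (Finset.mem_univ i)
    exact pow_eq_zero_iff two_ne_zero |>.mp h3'
  set u : Fin 4 → ℝ := fun i => if gamBar = 0 then 0 else ((1-c)/gamBar) * η₀ i with hu_def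
  have hui : ∀ i, u i = if gamBar = 0 then 0 else ((1-c)/gamBar) * η₀ i := fun i => rfl
  have hγu : ∀ i, gamBar * u i = (1-c) * η₀ i := by
    intro i; rw [hui]
    by_cases hg0 : gamBar = 0
    · rw [if_pos hg0, hg0]
      by_cases hr00 : r = 0
      · rw [hr0 hr00 i]; ring
      · have hc1 : c = 1 := by rw [hc_def, hg0]; simp
        rw [hc1]; ring
    · rw [if_neg hg0]; field_simp
  have hu1 : u 0^2+u 1^2+u 2^2+u 3^2 ≤ 1 := by
    by_cases hg0 : gamBar = 0
    · simp [hui, hg0]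
    · have hgpos : 0 < gamBar := lt_of_le_of_ne hgam (Ne.symm hg0)
      have hsum : u 0^2+u 1^2+u 2^2+u 3^2 = ((1-c)/gamBar)^2 * r^2 := by
        rw [hui 0, hui 1, hui 2, hui 3, if_neg hg0, if_neg hg0, if_neg hg0, if_neg hg0, hr2]
        ring
      rw [hsum]
      by_cases hrr : r ≤ gamBar
      · by_cases hr00 : r = 0
        · rw [hr00]; norm_num
        · have hrpos : 0 < r := lt_of_le_of_ne hrnn (Ne.symm hr00)
          have hge : 1 ≤ gamBar / r := (one_le_div hrpos).mpr hrr
          have hc0 : c = 0 := by rw [hc_def, max_eq_right (by linarith)]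
          rw [hc0, div_pow, sub_zero, one_pow, div_mul_eq_mul_div, one_mul,
            div_le_one (by positivity)]
          nlinarith
      · push_neg at hrr
        have hrpos : 0 < r := lt_of_le_of_lt hgam hrr
        have hlt : gamBar / r < 1 := (div_lt_one hrpos).mpr hrr
        have hcv : c = 1 - gamBar / r := by rw [hc_def, max_eq_left (by linarith)]
        have heq : (1-c)/gamBar = 1/r := by
          rw [hcv]; field_simp; ring
        rw [heq, div_pow, one_pow, div_mul_eq_mul_div, one_mul, div_le_one (by positivity)]
  have hnorm : Real.sqrt (ηhat 0^2+ηhat 1^2+ηhat 2^2+ηhat 3^2) = c*r := by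
    rw [hηhi 0, hηhi 1, hηhi 2, hηhi 3]
    rw [show (c*η₀ 0)^2+(c*η₀ 1)^2+(c*η₀ 2)^2+(c*η₀ 3)^2
        = c^2 * (η₀ 0^2+η₀ 1^2+η₀ 2^2+η₀ 3^2) from by ring, ← hr2,
      Real.sqrt_mul (sq_nonneg c), Real.sqrt_sq hcnn, Real.sqrt_sq hrnn]
  have hueq : gamBar*(u 0*ηhat 0+u 1*ηhat 1+u 2*ηhat 2+u 3*ηhat 3)
      = gamBar*Real.sqrt (ηhat 0^2+ηhat 1^2+ηhat 2^2+ηhat 3^2) := by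
    rw [hnorm]
    have hlhs : gamBar*(u 0*ηhat 0+u 1*ηhat 1+u 2*ηhat 2+u 3*ηhat 3) = c*((1-c)*r^2) := by
      rw [hηhi 0, hηhi 1, hηhi 2, hηhi 3]
      calc gamBar*(u 0*(c*η₀ 0)+u 1*(c*η₀ 1)+u 2*(c*η₀ 2)+u 3*(c*η₀ 3))
          = c*((gamBar*u 0)*η₀ 0+(gamBar*u 1)*η₀ 1+(gamBar*u 2)*η₀ 2+(gamBar*u 3)*η₀ 3) := by
            ring
        _ = c*(((1-c)*η₀ 0)*η₀ 0+((1-c)*η₀ 1)*η₀ 1+((1-c)*η₀ 2)*η₀ 2+((1-c)*η₀ 3)*η₀ 3) := by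
            rw [hγu 0, hγu 1, hγu 2, hγu 3]
        _ = (1-c)*c*(η₀ 0^2+η₀ 1^2+η₀ 2^2+η₀ 3^2) := by ring
        _ = c*((1-c)*r^2) := by rw [← hr2]; ring
    rw [hlhs]
    rcases eq_or_lt_of_le hcnn with hc0 | hcpos
    · rw [← hc0]; ring
    · by_cases hr00 : r = 0
      · rw [hr00]; ring
      · have hrpos : 0 < r := lt_of_le_of_ne hrnn (Ne.symm hr00)
        have hgr : 0 < 1 - gamBar / r := by
          rw [hc_def] at hcpos
          rcases lt_max_iff.mp hcpos with h | h
          · exact h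
          · exact absurd h (lt_irrefl 0)
        have hcv : c = 1 - gamBar / r := by rw [hc_def, max_eq_left hgr.le]
        rw [hcv]; field_simp; ring
  have hseqhat : s*(ηhat 0 - ηhat 1 - ηhat 2 + ηhat 3)
      = |ηhat 0 - ηhat 1 - ηhat 2 + ηhat 3| := by
    rw [hηhi 0, hηhi 1, hηhi 2, hηhi 3]
    rw [show c*η₀ 0 - c*η₀ 1 - c*η₀ 2 + c*η₀ 3 = c*(η₀ 0 - η₀ 1 - η₀ 2 + η₀ 3) from by ring,
      abs_mul, abs_of_nonneg hcnn]
    linear_combination c*hseq0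
  constructor
  · -- the f-part
    refine master lamBar gamBar hlam.le hgam ν f hf' s hsabs ηhat u ?_ ?_ ?_ ?_ hu1 hueq hseqhat
    · have := hγu 0; rw [hηhi 0]; linarith
    · have := hγu 1; rw [hηhi 1]; linarith
    · have := hγu 2; rw [hηhi 2]; linarith
    · have := hγu 3; rw [hηhi 3]; linarith
  · -- the g-part
    refine master lamBar 0 hlam.le le_rfl ν g hg' s hsabs η₀ (fun _ => 0) ?_ ?_ ?_ ?_
      (by norm_num) (by norm_num) hseq0
    · show ν 0 = η₀ 0 + lamBar*s + 0*0
      rw [h0]; ring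
    · show ν 1 = η₀ 1 - lamBar*s + 0*0
      rw [h1]; ring
    · show ν 2 = η₀ 2 - lamBar*s + 0*0
      rw [h2]; ring
    · show ν 3 = η₀ 3 + lamBar*s + 0*0
      rw [h3]; ring
end

section
/- Let J ≥ 2 and K ≥ 2 be integers and let D be the log-odds constraint matrix. Then (DᵀD)² = (J·K)·(DᵀD), and the rank of D equals (J − 1)(K − 1). Consequently, every nonzero singular value of D equals √(JK), and D has exactly (J − 1)(K − 1) nonzero singular values (counted with multiplicity). -/
/-- The log-odds constraint matrix `D` of the bivariate categorical response
model: rows are indexed by pairs `(j,k)`, columns by quadruples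
`(j,j',k,k')` with `j < j'` and `k < k'`, and the column indexed by
`(j,j',k,k')` is `e_{(j,k)} − e_{(j',k)} − e_{(j,k')} + e_{(j',k')}`. -/
noncomputable def logOddsD (J K : ℕ) :
    Matrix (Fin J × Fin K)
      {c : (Fin J × Fin J) × (Fin K × Fin K) // c.1.1 < c.1.2 ∧ c.2.1 < c.2.2} ℝ :=
  fun r c =>
    (if r = (c.val.1.1, c.val.2.1) then (1 : ℝ) else 0)
    - (if r = (c.val.1.2, c.val.2.1) then 1 else 0)
    - (if r = (c.val.1.1, c.val.2.2) then 1 else 0)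
    + (if r = (c.val.1.2, c.val.2.2) then 1 else 0)

namespace LogOdds

noncomputable def f {n : ℕ} (a : Fin n) (p : Fin n × Fin n) : ℝ :=
  (if a = p.1 then 1 else 0) - (if a = p.2 then 1 else 0)

noncomputable def g {n : ℕ} (p q : Fin n × Fin n) : ℝ :=
  (if p.1 = q.1 then 1 else 0) - (if p.1 = q.2 then 1 else 0)
    - (if p.2 = q.1 then 1 else 0) + (if p.2 = q.2 then 1 else 0)

lemma sum_f_mul_f {n : ℕ} (p q : Fin n × Fin n) :
    ∑ a : Fin n, f a p * f a q = g p q := by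
  simp [f, g, sub_mul, mul_sub, Finset.sum_sub_distrib, ite_mul, mul_ite,
    Finset.sum_ite_eq, Finset.sum_ite_eq']
  simp [eq_comm]
  ring

lemma g_self {n : ℕ} (p : Fin n × Fin n) (h : p.1 ≠ p.2) : g p p = 2 := by
  norm_num [g, h, h.symm]


lemma sum_all_g_mul_g {n : ℕ} (p r : Fin n × Fin n) :
    ∑ q : Fin n × Fin n, g p q * g q r = (2 * n) * g p r := by
  rw [Fintype.sum_prod_type]
  simp only [g, sub_mul, mul_sub, add_mul, mul_add, Finset.sum_sub_distrib,
    Finset.sum_add_distrib, ite_mul, mul_ite, one_mul, mul_one, zero_mul, mul_zero,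
    Finset.sum_ite_eq, Finset.sum_ite_eq', Finset.sum_const, nsmul_eq_mul,
    Finset.card_univ, Fintype.card_fin, Finset.mem_univ, if_true]
  simp [Finset.sum_sub_distrib, Finset.sum_add_distrib, Finset.sum_ite_eq',
    Finset.card_univ, apply_ite (Finset.card), Finset.sum_const, nsmul_eq_mul]
  split_ifs <;> ring


lemma g_swap_left {n : ℕ} (p q : Fin n × Fin n) : g p (q.2, q.1) = - g p q := by
  simp only [g]; ring

lemma g_swap_right {n : ℕ} (q r : Fin n × Fin n) : g (q.2, q.1) r = - g q r := by
  simp only [g]; ring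

lemma g_diag {n : ℕ} (p : Fin n × Fin n) (a : Fin n) : g p (a, a) = 0 := by
  simp only [g]; ring

lemma sum_lt_g_mul_g {n : ℕ} (p r : Fin n × Fin n) :
    ∑ q : {q : Fin n × Fin n // q.1 < q.2}, g p q.val * g q.val r = n * g p r := by
  classical
  have hsub : (∑ q : {q : Fin n × Fin n // q.1 < q.2}, g p q.val * g q.val r)
      = ∑ q ∈ Finset.univ.filter (fun q : Fin n × Fin n => q.1 < q.2),
          g p q * g q r := by
    rw [Finset.sum_subtype (p := fun q : Fin n × Fin n => q.1 < q.2)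
      (Finset.univ.filter (fun q : Fin n × Fin n => q.1 < q.2))
      (by simp) (fun q => g p q * g q r)]
  have h2 : ∑ q ∈ Finset.univ.filter (fun q : Fin n × Fin n => q.2 < q.1),
        g p q * g q r
      = ∑ q ∈ Finset.univ.filter (fun q : Fin n × Fin n => q.1 < q.2),
        g p q * g q r := by
    apply Finset.sum_nbij' (fun q => (q.2, q.1)) (fun q => (q.2, q.1)) <;>
      simp +contextual [g_swap_left, g_swap_right]
  have h3 : ∑ q ∈ Finset.univ.filter (fun q : Fin n × Fin n => ¬ q.1 < q.2),
        g p q * g q r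
      = ∑ q ∈ Finset.univ.filter (fun q : Fin n × Fin n => q.2 < q.1),
        g p q * g q r := by
    symm
    apply Finset.sum_subset
    · intro x hx
      simp only [Finset.mem_filter, Finset.mem_univ, true_and] at hx ⊢
      exact asymm hx
    · intro x hx hnx
      simp only [Finset.mem_filter, Finset.mem_univ, true_and] at hx hnx
      have : x.1 = x.2 := le_antisymm (not_lt.mp hnx) (not_lt.mp hx)
      have hx2 : x = (x.1, x.1) := Prod.ext rfl this.symm
      rw [hx2, g_diag, zero_mul]
  have h4 := Finset.sum_filter_add_sum_filter_not Finset.univ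
    (fun q : Fin n × Fin n => q.1 < q.2) (fun q => g p q * g q r)
  have h5 := sum_all_g_mul_g p r
  rw [hsub]
  rw [h3, h2] at h4
  linarith


lemma D_eq {J K : ℕ} (r : Fin J × Fin K)
    (c : {c : (Fin J × Fin J) × (Fin K × Fin K) // c.1.1 < c.1.2 ∧ c.2.1 < c.2.2}) :
    logOddsD J K r c = f r.1 c.val.1 * f r.2 c.val.2 := by
  simp only [logOddsD, f, Prod.ext_iff, ite_and]
  split_ifs <;> ring

lemma gram_apply {J K : ℕ}
    (c c' : {c : (Fin J × Fin J) × (Fin K × Fin K) // c.1.1 < c.1.2 ∧ c.2.1 < c.2.2}) :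
    ((logOddsD J K).transpose * logOddsD J K) c c'
      = g c.val.1 c'.val.1 * g c.val.2 c'.val.2 := by
  rw [Matrix.mul_apply]
  simp only [Matrix.transpose_apply, D_eq]
  rw [Fintype.sum_prod_type, ← sum_f_mul_f, ← sum_f_mul_f, Finset.sum_mul_sum]
  refine Finset.sum_congr rfl fun j _ => Finset.sum_congr rfl fun k _ => by ring


lemma gram_sq {J K : ℕ}
    (c c'' : {c : (Fin J × Fin J) × (Fin K × Fin K) // c.1.1 < c.1.2 ∧ c.2.1 < c.2.2}) :
    (((logOddsD J K).transpose * logOddsD J K) * ((logOddsD J K).transpose * logOddsD J K)) c c''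
      = ((J : ℝ) * K) * (((logOddsD J K).transpose * logOddsD J K) c c'') := by
  rw [Matrix.mul_apply]
  simp only [gram_apply]
  rw [← Equiv.sum_comp (Equiv.subtypeProdEquivProd
    (p := fun p : Fin J × Fin J => p.1 < p.2)
    (q := fun q : Fin K × Fin K => q.1 < q.2)).symm]
  rw [Fintype.sum_prod_type]
  simp only [Equiv.subtypeProdEquivProd, Equiv.coe_fn_symm_mk]
  have : (∑ a : {p : Fin J × Fin J // p.1 < p.2}, ∑ b : {q : Fin K × Fin K // q.1 < q.2},
        (g c.val.1 a.val * g c.val.2 b.val) * (g a.val c''.val.1 * g b.val c''.val.2))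
      = (∑ a : {p : Fin J × Fin J // p.1 < p.2}, g c.val.1 a.val * g a.val c''.val.1)
        * (∑ b : {q : Fin K × Fin K // q.1 < q.2}, g c.val.2 b.val * g b.val c''.val.2) := by
    rw [Finset.sum_mul_sum]
    exact Finset.sum_congr rfl fun a _ => Finset.sum_congr rfl fun b _ => by ring
  rw [this, sum_lt_g_mul_g, sum_lt_g_mul_g]
  ring


lemma gram_identity (J K : ℕ) :
    ((logOddsD J K).transpose * logOddsD J K) * ((logOddsD J K).transpose * logOddsD J K)
      = ((J * K : ℕ) : ℝ) • ((logOddsD J K).transpose * logOddsD J K) := by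
  ext c c''
  rw [Matrix.smul_apply, gram_sq, smul_eq_mul]
  push_cast
  ring

lemma two_mul_card_lt (n : ℕ) :
    2 * Fintype.card {p : Fin n × Fin n // p.1 < p.2} = n * n - n := by
  classical
  rw [Fintype.card_subtype]
  have h1 := Finset.card_filter_add_card_filter_not
    (s := (Finset.univ : Finset (Fin n × Fin n))) (p := fun q => q.1 < q.2)
  have hswap : (Finset.univ.filter fun q : Fin n × Fin n => q.2 < q.1).card
      = (Finset.univ.filter fun q : Fin n × Fin n => q.1 < q.2).card := by
    apply Finset.card_nbij' (fun q => (q.2, q.1)) (fun q => (q.2, q.1)) <;> intro q hq <;> simp_all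
  have hnot : (Finset.univ.filter fun q : Fin n × Fin n => ¬ q.1 < q.2)
      = (Finset.univ.filter fun q : Fin n × Fin n => q.2 < q.1)
        ∪ (Finset.univ.filter fun q : Fin n × Fin n => q.1 = q.2) := by
    rw [← Finset.filter_or]
    apply Finset.filter_congr
    intro q _
    constructor
    · intro h
      rcases lt_or_eq_of_le (not_lt.mp h) with h' | h'
      · exact Or.inl h'
      · exact Or.inr h'.symm
    · rintro (h | h)
      · exact asymm h
      · rw [h]; exact lt_irrefl _
  have hdisj : Disjoint (Finset.univ.filter fun q : Fin n × Fin n => q.2 < q.1)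
      (Finset.univ.filter fun q : Fin n × Fin n => q.1 = q.2) := by
    rw [Finset.disjoint_filter]
    intro q _ h h'
    rw [h'] at h
    exact lt_irrefl _ h
  have hdiag : (Finset.univ.filter fun q : Fin n × Fin n => q.1 = q.2)
      = Finset.univ.image (fun a : Fin n => (a, a)) := by
    ext ⟨a, b⟩
    simp [Prod.ext_iff, eq_comm]
  have hdiagcard : (Finset.univ.filter fun q : Fin n × Fin n => q.1 = q.2).card = n := by
    rw [hdiag, Finset.card_image_of_injective _ (fun a b h => (Prod.ext_iff.mp h).1),
      Finset.card_univ, Fintype.card_fin]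
  rw [hnot, Finset.card_union_of_disjoint hdisj, hswap, hdiagcard] at h1
  rw [Finset.card_univ, Fintype.card_prod, Fintype.card_fin] at h1
  omega


lemma trace_gram (J K : ℕ) :
    Matrix.trace ((logOddsD J K).transpose * logOddsD J K)
      = 4 * (Fintype.card
          {c : (Fin J × Fin J) × (Fin K × Fin K) // c.1.1 < c.1.2 ∧ c.2.1 < c.2.2} : ℝ) := by
  rw [Matrix.trace]
  have h : ∀ x : {c : (Fin J × Fin J) × (Fin K × Fin K) // c.1.1 < c.1.2 ∧ c.2.1 < c.2.2},
      ((logOddsD J K).transpose * logOddsD J K) x x = 4 := by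
    intro x
    rw [gram_apply, g_self _ (ne_of_lt x.2.1), g_self _ (ne_of_lt x.2.2)]
    norm_num
  simp [Matrix.diag, h, Finset.card_univ, mul_comm]

lemma rank_eq (J K : ℕ) (hJ : 2 ≤ J) (hK : 2 ≤ K) :
    (logOddsD J K).rank = (J - 1) * (K - 1) := by
  classical
  set S := {c : (Fin J × Fin J) × (Fin K × Fin K) // c.1.1 < c.1.2 ∧ c.2.1 < c.2.2}
  set M : Matrix S S ℝ := (logOddsD J K).transpose * logOddsD J K with hMdef
  have hM : M * M = ((J * K : ℕ) : ℝ) • M := gram_identity J K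
  set cR : ℝ := ((J * K : ℕ) : ℝ) with hcR
  have hc : cR ≠ 0 := by
    have : 0 < J * K := Nat.mul_pos (by omega) (by omega)
    positivity
  set P : Matrix S S ℝ := cR⁻¹ • M with hPdef
  have hP : P * P = P := by
    rw [hPdef, Matrix.smul_mul, Matrix.mul_smul, hM, smul_smul, smul_smul]
    congr 1
    field_simp
  have hmvl : P.mulVecLin = cR⁻¹ • M.mulVecLin := by
    ext v i
    simp [hPdef, Matrix.mulVecLin_apply, Matrix.smul_mulVec]
  have hrange : LinearMap.range P.mulVecLin = LinearMap.range M.mulVecLin := by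
    rw [hmvl]
    exact LinearMap.range_smul _ _ (inv_ne_zero hc)
  have hrankMP : M.rank = P.rank := by
    rw [Matrix.rank, Matrix.rank, hrange]
  have hproj : LinearMap.IsProj (LinearMap.range P.mulVecLin) P.mulVecLin := by
    constructor
    · intro x
      exact LinearMap.mem_range_self _ x
    · rintro x ⟨y, rfl⟩
      have h2 := congrArg Matrix.mulVecLin hP
      rw [Matrix.mulVecLin_mul] at h2
      exact DFunLike.congr_fun h2 y
  have htr := hproj.trace
  have htrP : LinearMap.trace ℝ (S → ℝ) P.mulVecLin = Matrix.trace P := by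
    rw [LinearMap.trace_eq_matrix_trace ℝ (Pi.basisFun ℝ S) P.mulVecLin,
      LinearMap.toMatrix_eq_toMatrix']
    congr 1
    rw [← Matrix.toLin'_apply', LinearMap.toMatrix'_toLin']
  have hfr : Module.finrank ℝ (LinearMap.range P.mulVecLin) = P.rank := rfl
  have htrPval : Matrix.trace P = cR⁻¹ * (4 * (Fintype.card S : ℝ)) := by
    rw [hPdef, Matrix.trace_smul, hMdef, trace_gram, smul_eq_mul]
  have key : (cR : ℝ) * (P.rank : ℝ) = 4 * (Fintype.card S : ℝ) := by
    rw [← hfr, ← htr, htrP, htrPval]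
    field_simp
  -- card of S
  have hcard : Fintype.card S
      = Fintype.card {p : Fin J × Fin J // p.1 < p.2}
        * Fintype.card {q : Fin K × Fin K // q.1 < q.2} := by
    rw [Fintype.card_congr (Equiv.subtypeProdEquivProd
      (p := fun p : Fin J × Fin J => p.1 < p.2)
      (q := fun q : Fin K × Fin K => q.1 < q.2)), Fintype.card_prod]
  have keyN : (J * K) * P.rank = 4 * Fintype.card S := by
    have : ((J * K) * P.rank : ℕ) = ((4 * Fintype.card S : ℕ) : ℕ) := by
      have := key
      rw [hcR] at this
      exact_mod_cast this
    exact this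
  have hJ1 : J * J - J = J * (J - 1) := by
    cases J with
    | zero => simp
    | succ m => simp [Nat.succ_sub_one, Nat.mul_sub, Nat.mul_succ]
  have hK1 : K * K - K = K * (K - 1) := by
    cases K with
    | zero => simp
    | succ m => simp [Nat.succ_sub_one, Nat.mul_sub, Nat.mul_succ]
  have h4 : 4 * Fintype.card S = (J * (J - 1)) * (K * (K - 1)) := by
    rw [hcard, ← hJ1, ← hK1, ← two_mul_card_lt J, ← two_mul_card_lt K]
    ring
  have hfin : (J * K) * P.rank = (J * K) * ((J - 1) * (K - 1)) := by
    rw [keyN, h4]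
    ring
  have hpos : 0 < J * K := Nat.mul_pos (by omega) (by omega)
  have hrankP : P.rank = (J - 1) * (K - 1) := Nat.eq_of_mul_eq_mul_left hpos hfin
  rw [← Matrix.rank_transpose_mul_self, ← hMdef, hrankMP, hrankP]

end LogOdds

/-- For the log-odds constraint matrix `D`: `(DᵀD)² = (JK)·(DᵀD)`, the rank of
`D` is `(J−1)(K−1)`, and consequently every nonzero singular value of `D`
(i.e. every `σ > 0` with `DᵀD v = σ² v` for some `v ≠ 0`) equals `√(JK)`. -/
theorem logOddsD_gram_and_rank (J K : ℕ) (hJ : 2 ≤ J) (hK : 2 ≤ K) :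
    ((logOddsD J K).transpose * logOddsD J K) * ((logOddsD J K).transpose * logOddsD J K)
      = ((J * K : ℕ) : ℝ) • ((logOddsD J K).transpose * logOddsD J K) ∧
    (logOddsD J K).rank = (J - 1) * (K - 1) ∧
    (∀ σ : ℝ, 0 < σ →
      (∃ v : {c : (Fin J × Fin J) × (Fin K × Fin K) // c.1.1 < c.1.2 ∧ c.2.1 < c.2.2} → ℝ,
        v ≠ 0 ∧ ((logOddsD J K).transpose * logOddsD J K).mulVec v = σ ^ 2 • v) →
      σ = Real.sqrt ((J * K : ℕ))) := by
  refine ⟨LogOdds.gram_identity J K, LogOdds.rank_eq J K hJ hK, ?_⟩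
  rintro σ hσ ⟨v, hv, hvec⟩
  set M := (logOddsD J K).transpose * logOddsD J K with hMdef
  have h1 : M.mulVec (M.mulVec v) = ((J * K : ℕ) : ℝ) • (M.mulVec v) := by
    rw [Matrix.mulVec_mulVec, LogOdds.gram_identity J K, ← hMdef,
      Matrix.smul_mulVec]
  rw [hvec, Matrix.mulVec_smul, hvec] at h1
  have h2 : (σ ^ 2 * σ ^ 2 - ((J * K : ℕ) : ℝ) * σ ^ 2) • v = 0 := by
    rw [sub_smul, mul_smul, mul_smul, h1, sub_self]
  rcases smul_eq_zero.mp h2 with h3 | h3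
  · have hσ2 : σ ^ 2 ≠ 0 := pow_ne_zero _ hσ.ne'
    have h4 : σ ^ 2 = ((J * K : ℕ) : ℝ) := by
      have h5 : σ ^ 2 * (σ ^ 2 - ((J * K : ℕ) : ℝ)) = 0 := by linear_combination h3
      rcases mul_eq_zero.mp h5 with h | h
      · exact absurd h hσ2
      · linarith
    rw [← Real.sqrt_sq hσ.le, h4]
  · exact absurd h3 hv
end

section
/- Let J ≥ 2, K ≥ 2 and p ≥ 1 be integers and let D be the log-odds constraint matrix. For every subset S ⊆ {1, …, p} and every real p × JK matrix M, it holds that Σ_{m ∈ S} ‖Dᵀ(M_{m,:})ᵀ‖₂ ≤ √(|S| · J · K · (J−1) · (K−1)) · ‖M‖_F, where M_{m,:} denotes the m-th row of M and ‖M‖_F = √(Σ_{m,g} M_{m,g}²) is the Frobenius norm. In particular, the subspace compatibility constant Ψ_{JK}(s) = sup{ Σ_{m ∈ S} ‖Dᵀ(M_{m,:})ᵀ‖₂ / ‖M‖_F : M ≠ 0 } over any S with |S| = s satisfies Ψ_{JK}(s) ≤ √(s·J·K·(J−1)(K−1)). -/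
def pairEquiv (n : ℕ) : {a : Fin n × Fin n // a.1 < a.2} ≃ Σ j : Fin n, {j' : Fin n // j < j'} where
  toFun a := ⟨a.1.1, a.1.2, a.2⟩
  invFun s := ⟨(s.1, s.2.1), s.2.2⟩
  left_inv _ := rfl
  right_inv _ := rfl

lemma card_pairs (n : ℕ) :
    2 * Fintype.card {a : Fin n × Fin n // a.1 < a.2} = n * (n - 1) := by
  rw [Fintype.card_congr (pairEquiv n), Fintype.card_sigma]
  have h1 : ∀ j : Fin n, Fintype.card {j' : Fin n // j < j'} = n - 1 - j := by
    intro j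
    rw [Fintype.card_subtype]
    have : Finset.filter (fun j' : Fin n => j < j') Finset.univ = Finset.Ioi j := by
      ext x; simp
    rw [this, Fin.card_Ioi]
  simp_rw [h1]
  rw [Fin.sum_univ_eq_sum_range]
  rw [Finset.sum_range_reflect (fun i => i) n]
  rw [mul_comm, Finset.sum_range_id_mul_two]

lemma card_cols (J K : ℕ) :
    4 * Fintype.card
        {c : (Fin J × Fin J) × (Fin K × Fin K) // c.1.1 < c.1.2 ∧ c.2.1 < c.2.2}
      = (J * (J - 1)) * (K * (K - 1)) := by
  rw [Fintype.card_congr (Equiv.subtypeProdEquivProd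
    (p := fun a : Fin J × Fin J => a.1 < a.2) (q := fun b : Fin K × Fin K => b.1 < b.2)),
    Fintype.card_prod]
  rw [← card_pairs J, ← card_pairs K]; ring

lemma four_sq_le_sum {ι : Type*} [Fintype ι] [DecidableEq ι] (v : ι → ℝ) (a b c d : ι)
    (hab : a ≠ b) (hac : a ≠ c) (had : a ≠ d) (hbc : b ≠ c) (hbd : b ≠ d) (hcd : c ≠ d) :
    v a ^ 2 + v b ^ 2 + v c ^ 2 + v d ^ 2 ≤ ∑ i, v i ^ 2 := by
  have h : ∑ i ∈ ({a, b, c, d} : Finset ι), v i ^ 2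
      = v a ^ 2 + v b ^ 2 + v c ^ 2 + v d ^ 2 := by
    rw [Finset.sum_insert (by simp [hab, hac, had]),
      Finset.sum_insert (by simp [hbc, hbd]),
      Finset.sum_insert (by simp [hcd]), Finset.sum_singleton]
    ring
  rw [← h]
  exact Finset.sum_le_sum_of_subset_of_nonneg (Finset.subset_univ _)
    (fun i _ _ => sq_nonneg _)

lemma mulVec_formula (J K : ℕ) (v : Fin J × Fin K → ℝ)
    (c : {c : (Fin J × Fin J) × (Fin K × Fin K) // c.1.1 < c.1.2 ∧ c.2.1 < c.2.2}) :
    (logOddsD J K).transpose.mulVec v c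
      = v (c.val.1.1, c.val.2.1) - v (c.val.1.2, c.val.2.1)
        - v (c.val.1.1, c.val.2.2) + v (c.val.1.2, c.val.2.2) := by
  simp [Matrix.mulVec, Matrix.transpose, logOddsD, dotProduct, sub_mul, add_mul,
    ite_mul, Finset.sum_add_distrib, Finset.sum_sub_distrib]

lemma sq_sum_le (J K : ℕ) (v : Fin J × Fin K → ℝ)
    (c : {c : (Fin J × Fin J) × (Fin K × Fin K) // c.1.1 < c.1.2 ∧ c.2.1 < c.2.2}) :
    ((logOddsD J K).transpose.mulVec v c) ^ 2 ≤ 4 * ∑ g, v g ^ 2 := by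
  rw [mulVec_formula]
  obtain ⟨⟨⟨j, j'⟩, ⟨k, k'⟩⟩, hj, hk⟩ := c
  simp only at hj hk ⊢
  have hjne : j ≠ j' := ne_of_lt hj
  have hkne : k ≠ k' := ne_of_lt hk
  have e1 : ((j, k) : Fin J × Fin K) ≠ (j', k) := by simp [hjne]
  have e2 : ((j, k) : Fin J × Fin K) ≠ (j, k') := by simp [hkne]
  have e3 : ((j, k) : Fin J × Fin K) ≠ (j', k') := by simp [hjne]
  have e4 : ((j', k) : Fin J × Fin K) ≠ (j, k') := fun h => hjne (congrArg Prod.fst h).symm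
  have e5 : ((j', k) : Fin J × Fin K) ≠ (j', k') := by simp [hkne]
  have e6 : ((j, k') : Fin J × Fin K) ≠ (j', k') := by simp [hjne]
  have h4 : v (j, k) ^ 2 + v (j', k) ^ 2 + v (j, k') ^ 2 + v (j', k') ^ 2 ≤ ∑ g, v g ^ 2 :=
    four_sq_le_sum v _ _ _ _ e1 e2 e3 e4 e5 e6
  set a := v (j, k); set b := v (j', k); set c := v (j, k'); set d := v (j', k')
  have key : (a - b - c + d) ^ 2 ≤ 4 * (a ^ 2 + b ^ 2 + c ^ 2 + d ^ 2) := by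
    nlinarith [sq_nonneg (a + b), sq_nonneg (a + c), sq_nonneg (b + d), sq_nonneg (c + d),
      sq_nonneg (a - d), sq_nonneg (b - c)]
  linarith

lemma l2norm_bound (J K : ℕ) (hJ : 2 ≤ J) (hK : 2 ≤ K) (v : Fin J × Fin K → ℝ) :
    l2norm ((logOddsD J K).transpose.mulVec v)
      ≤ Real.sqrt ((J : ℝ) * K * ((J : ℝ) - 1) * ((K : ℝ) - 1))
        * Real.sqrt (∑ g, v g ^ 2) := by
  have hW : (0 : ℝ) ≤ ∑ g, v g ^ 2 := Finset.sum_nonneg fun _ _ => sq_nonneg _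
  have hcard : (4 : ℝ) * Fintype.card
        {c : (Fin J × Fin J) × (Fin K × Fin K) // c.1.1 < c.1.2 ∧ c.2.1 < c.2.2}
      = (J : ℝ) * K * ((J : ℝ) - 1) * ((K : ℝ) - 1) := by
    have := card_cols J K
    have h1 : ((J - 1 : ℕ) : ℝ) = (J : ℝ) - 1 := by
      push_cast [Nat.cast_sub (by omega : 1 ≤ J)]; ring
    have h2 : ((K - 1 : ℕ) : ℝ) = (K : ℝ) - 1 := by
      push_cast [Nat.cast_sub (by omega : 1 ≤ K)]; ring
    calc (4 : ℝ) * Fintype.card _ = ((4 * Fintype.card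
        {c : (Fin J × Fin J) × (Fin K × Fin K) // c.1.1 < c.1.2 ∧ c.2.1 < c.2.2} : ℕ) : ℝ) := by
          push_cast; ring
      _ = (((J * (J - 1)) * (K * (K - 1)) : ℕ) : ℝ) := by rw [this]
      _ = (J : ℝ) * K * ((J : ℝ) - 1) * ((K : ℝ) - 1) := by push_cast [h1, h2]; ring
  have hT : ∑ c, ((logOddsD J K).transpose.mulVec v c) ^ 2
      ≤ (J : ℝ) * K * ((J : ℝ) - 1) * ((K : ℝ) - 1) * ∑ g, v g ^ 2 := by
    calc ∑ c, ((logOddsD J K).transpose.mulVec v c) ^ 2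
        ≤ ∑ _c : {c : (Fin J × Fin J) × (Fin K × Fin K) // c.1.1 < c.1.2 ∧ c.2.1 < c.2.2},
            4 * ∑ g, v g ^ 2 := Finset.sum_le_sum fun c _ => sq_sum_le J K v c
      _ = (4 : ℝ) * Fintype.card
            {c : (Fin J × Fin J) × (Fin K × Fin K) // c.1.1 < c.1.2 ∧ c.2.1 < c.2.2}
            * ∑ g, v g ^ 2 := by
          rw [Finset.sum_const, nsmul_eq_mul, Finset.card_univ]; ring
      _ = _ := by rw [hcard]
  have hJ1 : (1 : ℝ) ≤ (J : ℝ) := by exact_mod_cast Nat.one_le_of_lt hJ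
  have hK1 : (1 : ℝ) ≤ (K : ℝ) := by exact_mod_cast Nat.one_le_of_lt hK
  have hCnn : (0:ℝ) ≤ (J : ℝ) * K * ((J : ℝ) - 1) * ((K : ℝ) - 1) :=
    mul_nonneg (mul_nonneg (mul_nonneg (by linarith) (by linarith)) (by linarith)) (by linarith)
  rw [l2norm, ← Real.sqrt_mul hCnn]
  exact Real.sqrt_le_sqrt hT

/-- Bound on the subspace compatibility constant: for every `S ⊆ {1,…,p}` and
every `p × JK` real matrix `M`,
`Σ_{m ∈ S} ‖Dᵀ(M_{m,:})ᵀ‖₂ ≤ √(|S|·J·K·(J−1)·(K−1))·‖M‖_F`. -/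
theorem subspace_compatibility_bound
    (J K p : ℕ) (hJ : 2 ≤ J) (hK : 2 ≤ K) (hp : 1 ≤ p)
    (S : Finset (Fin p)) (M : Fin p → (Fin J × Fin K) → ℝ) :
    ∑ m ∈ S, l2norm ((logOddsD J K).transpose.mulVec (M m))
      ≤ Real.sqrt ((S.card : ℝ) * J * K * ((J : ℝ) - 1) * ((K : ℝ) - 1))
        * Real.sqrt (∑ m, ∑ g, (M m g) ^ 2) := by
  set C : ℝ := (J : ℝ) * K * ((J : ℝ) - 1) * ((K : ℝ) - 1) with hC
  have hJ1 : (1 : ℝ) ≤ (J : ℝ) := by exact_mod_cast Nat.one_le_of_lt hJ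
  have hK1 : (1 : ℝ) ≤ (K : ℝ) := by exact_mod_cast Nat.one_le_of_lt hK
  have hCnn : 0 ≤ C :=
    mul_nonneg (mul_nonneg (mul_nonneg (by linarith) (by linarith)) (by linarith)) (by linarith)
  have hWnn : ∀ m, (0:ℝ) ≤ ∑ g, M m g ^ 2 := fun m => Finset.sum_nonneg fun _ _ => sq_nonneg _
  have step1 : ∑ m ∈ S, l2norm ((logOddsD J K).transpose.mulVec (M m))
      ≤ Real.sqrt C * ∑ m ∈ S, Real.sqrt (∑ g, M m g ^ 2) := by
    rw [Finset.mul_sum]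
    exact Finset.sum_le_sum fun m _ => l2norm_bound J K hJ hK (M m)
  have step2 : ∑ m ∈ S, Real.sqrt (∑ g, M m g ^ 2)
      ≤ Real.sqrt (S.card) * Real.sqrt (∑ m, ∑ g, M m g ^ 2) := by
    have hcs := Finset.sum_mul_sq_le_sq_mul_sq S (fun _ => (1:ℝ))
      (fun m => Real.sqrt (∑ g, M m g ^ 2))
    simp only [one_mul, one_pow] at hcs
    have hsq : ∀ m, Real.sqrt (∑ g, M m g ^ 2) ^ 2 = ∑ g, M m g ^ 2 := fun m =>
      Real.sq_sqrt (hWnn m)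
    simp only [hsq, Finset.sum_const, nsmul_eq_mul, mul_one] at hcs
    have hle : ∑ m ∈ S, ∑ g, M m g ^ 2 ≤ ∑ m, ∑ g, M m g ^ 2 :=
      Finset.sum_le_sum_of_subset_of_nonneg (Finset.subset_univ _) (fun m _ _ => hWnn m)
    have h2 : (∑ m ∈ S, Real.sqrt (∑ g, M m g ^ 2)) ^ 2
        ≤ (S.card : ℝ) * ∑ m, ∑ g, M m g ^ 2 := by
      refine hcs.trans ?_
      exact mul_le_mul_of_nonneg_left hle (Nat.cast_nonneg _)
    have hpos : 0 ≤ ∑ m ∈ S, Real.sqrt (∑ g, M m g ^ 2) :=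
      Finset.sum_nonneg fun m _ => Real.sqrt_nonneg _
    calc ∑ m ∈ S, Real.sqrt (∑ g, M m g ^ 2)
        ≤ Real.sqrt ((S.card : ℝ) * ∑ m, ∑ g, M m g ^ 2) := by
          rw [show (∑ m ∈ S, Real.sqrt (∑ g, M m g ^ 2))
              = Real.sqrt ((∑ m ∈ S, Real.sqrt (∑ g, M m g ^ 2))^2) from
            (Real.sqrt_sq hpos).symm]
          exact Real.sqrt_le_sqrt h2
      _ = Real.sqrt (S.card) * Real.sqrt (∑ m, ∑ g, M m g ^ 2) :=
          Real.sqrt_mul (Nat.cast_nonneg _) _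
  calc ∑ m ∈ S, l2norm ((logOddsD J K).transpose.mulVec (M m))
      ≤ Real.sqrt C * (Real.sqrt (S.card) * Real.sqrt (∑ m, ∑ g, M m g ^ 2)) :=
        step1.trans (mul_le_mul_of_nonneg_left step2 (Real.sqrt_nonneg _))
    _ = Real.sqrt ((S.card : ℝ) * J * K * ((J : ℝ) - 1) * ((K : ℝ) - 1))
        * Real.sqrt (∑ m, ∑ g, (M m g) ^ 2) := by
        rw [← mul_assoc, ← Real.sqrt_mul hCnn, hC]
        ring_nf
end

section
/- Let J, K, L be positive integers and let π : {1,…,J} × {1,…,K} × {1,…,L} → ℝ be strictly positive with Σ_{j,k,l} π(j,k,l) = 1. Suppose: (a) π(j,k,l)·π(j+1,k+1,l) = π(j+1,k,l)·π(j,k+1,l) for all j ≤ J−1, k ≤ K−1, l ≤ L; (b) π(j,1,l)·π(j+1,1,l+1) = π(j+1,1,l)·π(j,1,l+1) for all j ≤ J−1, l ≤ L−1; and (c) π(1,k,l)·π(1,k+1,l+1) = π(1,k+1,l)·π(1,k,l+1) for all k ≤ K−1, l ≤ L−1. Then π factorizes completely: for all j, k, l, π(j,k,l) = π₁(j)·π₂(k)·π₃(l),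 where π₁(j) = Σ_{k,l} π(j,k,l), π₂(k) = Σ_{j,l} π(j,k,l) and π₃(l) = Σ_{j,k} π(j,k,l). -/
lemma cross_eq {J K : ℕ} (hJ : 0 < J) (hK : 0 < K) (f : Fin J → Fin K → ℝ)
    (hpos : ∀ j k, 0 < f j k)
    (h : ∀ (j : Fin J) (k : Fin K) (hj : j.val + 1 < J) (hk : k.val + 1 < K),
      f j k * f ⟨j.val + 1, hj⟩ ⟨k.val + 1, hk⟩
        = f ⟨j.val + 1, hj⟩ k * f j ⟨k.val + 1, hk⟩) :
    ∀ (j : Fin J) (k : Fin K),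
      f j k * f ⟨0, hJ⟩ ⟨0, hK⟩ = f j ⟨0, hK⟩ * f ⟨0, hJ⟩ k := by
  have stepA : ∀ (j : Fin J) (hj : j.val + 1 < J) (k : Fin K),
      f j k * f ⟨j.val + 1, hj⟩ ⟨0, hK⟩ = f ⟨j.val + 1, hj⟩ k * f j ⟨0, hK⟩ := by
    intro j hj k
    have H : ∀ (n : ℕ) (hn : n < K),
        f j ⟨n, hn⟩ * f ⟨j.val + 1, hj⟩ ⟨0, hK⟩
          = f ⟨j.val + 1, hj⟩ ⟨n, hn⟩ * f j ⟨0, hK⟩ := by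
      intro n
      induction n with
      | zero => intro hn; exact mul_comm _ _
      | succ n ih =>
        intro hn
        have hn' : n < K := Nat.lt_of_succ_lt hn
        have h1 := h j ⟨n, hn'⟩ hj hn
        have h2 := ih hn'
        apply mul_left_cancel₀ (hpos ⟨j.val + 1, hj⟩ ⟨n, hn'⟩).ne'
        linear_combination f ⟨j.val + 1, hj⟩ ⟨n + 1, hn⟩ * h2
          - f ⟨j.val + 1, hj⟩ ⟨0, hK⟩ * h1
    exact H k.val k.isLt
  have H : ∀ (m : ℕ) (hm : m < J) (k : Fin K),
      f ⟨m, hm⟩ k * f ⟨0, hJ⟩ ⟨0, hK⟩ = f ⟨m, hm⟩ ⟨0, hK⟩ * f ⟨0, hJ⟩ k := by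
    intro m
    induction m with
    | zero => intro hm k; exact mul_comm _ _
    | succ m ih =>
      intro hm k
      have hm' : m < J := Nat.lt_of_succ_lt hm
      have hA := stepA ⟨m, hm'⟩ hm k
      have h2 := ih hm' k
      apply mul_left_cancel₀ (hpos ⟨m, hm'⟩ ⟨0, hK⟩).ne'
      linear_combination f ⟨m + 1, hm⟩ ⟨0, hK⟩ * h2 - f ⟨0, hJ⟩ ⟨0, hK⟩ * hA
  exact fun j k => H j.val j.isLt k

/-- If (a) all adjacent local odds ratios of `(Y₁,Y₂)` within each level of
`Y₃` are one, (b) all adjacent local odds ratios of `(Y₁,Y₃)` within the first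
level of `Y₂` are one, and (c) all adjacent local odds ratios of `(Y₂,Y₃)`
within the first level of `Y₁` are one, then the joint pmf factorizes into the
product of its three marginals: `π(j,k,l) = π₁(j)·π₂(k)·π₃(l)`. -/
theorem local_odds_imply_mutual_independence
    (J K L : ℕ) (hJ : 0 < J) (hK : 0 < K) (hL : 0 < L)
    (π : Fin J → Fin K → Fin L → ℝ)
    (hpos : ∀ j k l, 0 < π j k l)
    (hsum : ∑ j, ∑ k, ∑ l, π j k l = 1)
    (ha : ∀ (j : Fin J) (k : Fin K) (l : Fin L)
        (hj : j.val + 1 < J) (hk : k.val + 1 < K),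
      π j k l * π ⟨j.val + 1, hj⟩ ⟨k.val + 1, hk⟩ l
        = π ⟨j.val + 1, hj⟩ k l * π j ⟨k.val + 1, hk⟩ l)
    (hb : ∀ (j : Fin J) (l : Fin L) (hj : j.val + 1 < J) (hl : l.val + 1 < L),
      π j ⟨0, hK⟩ l * π ⟨j.val + 1, hj⟩ ⟨0, hK⟩ ⟨l.val + 1, hl⟩
        = π ⟨j.val + 1, hj⟩ ⟨0, hK⟩ l * π j ⟨0, hK⟩ ⟨l.val + 1, hl⟩)
    (hc : ∀ (k : Fin K) (l : Fin L) (hk : k.val + 1 < K) (hl : l.val + 1 < L),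
      π ⟨0, hJ⟩ k l * π ⟨0, hJ⟩ ⟨k.val + 1, hk⟩ ⟨l.val + 1, hl⟩
        = π ⟨0, hJ⟩ ⟨k.val + 1, hk⟩ l * π ⟨0, hJ⟩ k ⟨l.val + 1, hl⟩) :
    ∀ (j : Fin J) (k : Fin K) (l : Fin L),
      π j k l = (∑ t, ∑ u, π j t u) * (∑ s, ∑ u, π s k u) * (∑ s, ∑ t, π s t l) := by
  set j0 : Fin J := ⟨0, hJ⟩ with hj0
  set k0 : Fin K := ⟨0, hK⟩ with hk0
  set l0 : Fin L := ⟨0, hL⟩ with hl0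
  set p : ℝ := π j0 k0 l0 with hp
  -- the three 2D rank-one identities
  have e1 : ∀ (j : Fin J) (k : Fin K) (l : Fin L),
      π j k l * π j0 k0 l = π j k0 l * π j0 k l := by
    intro j k l
    exact cross_eq hJ hK (fun j k => π j k l) (fun j k => hpos j k l)
      (fun j k hj hk => ha j k l hj hk) j k
  have e2 : ∀ (j : Fin J) (l : Fin L),
      π j k0 l * p = π j k0 l0 * π j0 k0 l := by
    intro j l
    exact cross_eq hJ hL (fun j l => π j k0 l) (fun j l => hpos j k0 l)
      (fun j l hj hl => hb j l hj hl) j l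
  have e3 : ∀ (k : Fin K) (l : Fin L),
      π j0 k l * p = π j0 k l0 * π j0 k0 l := by
    intro k l
    exact cross_eq hK hL (fun k l => π j0 k l) (fun k l => hpos j0 k l)
      (fun k l hk hl => hc k l hk hl) k l
  -- key factorization through the corner
  have key : ∀ (j : Fin J) (k : Fin K) (l : Fin L),
      π j k l * p ^ 2 = π j k0 l0 * π j0 k l0 * π j0 k0 l := by
    intro j k l
    apply mul_left_cancel₀ (hpos j0 k0 l).ne'
    linear_combination p ^ 2 * e1 j k l + π j0 k l * p * e2 j l
      + π j k0 l0 * π j0 k0 l * e3 k l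
  -- marginals
  have m1 : ∀ j : Fin J, (∑ t, ∑ u, π j t u) * p ^ 2
      = π j k0 l0 * ((∑ t, π j0 t l0) * (∑ u, π j0 k0 u)) := by
    intro j
    calc (∑ t, ∑ u, π j t u) * p ^ 2
        = ∑ t, ∑ u, π j k0 l0 * (π j0 t l0 * π j0 k0 u) := by
          simp_rw [Finset.sum_mul, key]
          exact Finset.sum_congr rfl fun t _ => Finset.sum_congr rfl fun u _ => by ring
      _ = π j k0 l0 * ((∑ t, π j0 t l0) * (∑ u, π j0 k0 u)) := by
          rw [Finset.sum_mul_sum]; simp_rw [Finset.mul_sum]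
  have m2 : ∀ k : Fin K, (∑ s, ∑ u, π s k u) * p ^ 2
      = π j0 k l0 * ((∑ s, π s k0 l0) * (∑ u, π j0 k0 u)) := by
    intro k
    calc (∑ s, ∑ u, π s k u) * p ^ 2
        = ∑ s, ∑ u, π j0 k l0 * (π s k0 l0 * π j0 k0 u) := by
          simp_rw [Finset.sum_mul, key]
          exact Finset.sum_congr rfl fun s _ => Finset.sum_congr rfl fun u _ => by ring
      _ = π j0 k l0 * ((∑ s, π s k0 l0) * (∑ u, π j0 k0 u)) := by
          rw [Finset.sum_mul_sum]; simp_rw [Finset.mul_sum]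
  have m3 : ∀ l : Fin L, (∑ s, ∑ t, π s t l) * p ^ 2
      = π j0 k0 l * ((∑ s, π s k0 l0) * (∑ t, π j0 t l0)) := by
    intro l
    calc (∑ s, ∑ t, π s t l) * p ^ 2
        = ∑ s, ∑ t, π j0 k0 l * (π s k0 l0 * π j0 t l0) := by
          simp_rw [Finset.sum_mul, key]
          exact Finset.sum_congr rfl fun s _ => Finset.sum_congr rfl fun t _ => by ring
      _ = π j0 k0 l * ((∑ s, π s k0 l0) * (∑ t, π j0 t l0)) := by
          rw [Finset.sum_mul_sum]; simp_rw [Finset.mul_sum]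
  set A : ℝ := ∑ s, π s k0 l0 with hA
  set B : ℝ := ∑ t, π j0 t l0 with hB
  set C : ℝ := ∑ u, π j0 k0 u with hC
  have habc : A * (B * C) = p ^ 2 := by
    calc A * (B * C) = ∑ s, π s k0 l0 * (B * C) := by rw [Finset.sum_mul]
      _ = ∑ s, (∑ t, ∑ u, π s t u) * p ^ 2 :=
          Finset.sum_congr rfl fun s _ => (m1 s).symm
      _ = (∑ s, ∑ t, ∑ u, π s t u) * p ^ 2 := by rw [Finset.sum_mul]
      _ = p ^ 2 := by rw [hsum, one_mul]
  intro j k l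
  apply mul_right_cancel₀ (pow_ne_zero 6 (hpos j0 k0 l0).ne')
  calc π j k l * p ^ 6
      = (π j k l * p ^ 2) * ((A * (B * C)) * (A * (B * C))) := by rw [habc]; ring
    _ = (π j k0 l0 * (B * C)) * ((π j0 k l0 * (A * C)) * (π j0 k0 l * (A * B))) := by
        rw [key]; ring
    _ = ((∑ t, ∑ u, π j t u) * p ^ 2) * (((∑ s, ∑ u, π s k u) * p ^ 2)
        * ((∑ s, ∑ t, π s t l) * p ^ 2)) := by rw [m1, m2, m3]
    _ = (∑ t, ∑ u, π j t u) * (∑ s, ∑ u, π s k u) * (∑ s, ∑ t, π s t l) * p ^ 6 := by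
        ring
end

section
/- Let J, K, p be positive integers, let b : {1,…,J} × {1,…,K} → ℝ^p, for x ∈ ℝ^p define π_{j,k}(x) = exp(⟨x, b(j,k)⟩) / Σ_{s,t} exp(⟨x, b(s,t)⟩), and fix m ∈ {1,…,p}. Suppose that for all j, j' ∈ {1,…,J} and k, k' ∈ {1,…,K}, the m-th coordinate of b(j,k) + b(j',k') − b(j,k') − b(j',k) is zero. Then for any x, x̃ ∈ ℝ^p that differ only in their m-th coordinate, all odds ratios coincide: π_{j,k}(x)·π_{j',k'}(x) / ( π_{j,k'}(x)·π_{j',k}(x) ) = π_{j,k}(x̃)·π_{j',k'}(x̃) / ( π_{j,k'}(x̃)·π_{j',k}(x̃) ) for all j, j', k, k'. -/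
/-- If every contrast `b(j,k)_m + b(j',k')_m − b(j,k')_m − b(j',k)_m` vanishes
for a fixed coordinate `m`, then changing only the `m`-th coordinate of `x`
leaves all odds ratios of the joint response distribution unchanged. -/
theorem irrelevant_coordinate_for_odds_ratios
    (J K p : ℕ) (hJ : 0 < J) (hK : 0 < K) (hp : 0 < p)
    (b : Fin J → Fin K → Fin p → ℝ)
    (π : (Fin p → ℝ) → Fin J → Fin K → ℝ)
    (hπ : ∀ x j k, π x j k = Real.exp (∑ m, x m * b j k m)
        / ∑ s, ∑ t, Real.exp (∑ m, x m * b s t m))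
    (m₀ : Fin p)
    (hcontrast : ∀ (j j' : Fin J) (k k' : Fin K),
      b j k m₀ + b j' k' m₀ - b j k' m₀ - b j' k m₀ = 0) :
    ∀ x xt : Fin p → ℝ, (∀ m : Fin p, m ≠ m₀ → x m = xt m) →
      ∀ (j j' : Fin J) (k k' : Fin K),
        π x j k * π x j' k' / (π x j k' * π x j' k)
          = π xt j k * π xt j' k' / (π xt j k' * π xt j' k) := by
  intro x xt hx j j' k k'
  have hS : ∀ y : Fin p → ℝ,
      (0 : ℝ) < ∑ s, ∑ t, Real.exp (∑ m, y m * b s t m) := by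
    intro y
    refine Finset.sum_pos (fun s _ => Finset.sum_pos
      (fun t _ => Real.exp_pos _) ?_) ?_
    · exact Finset.univ_nonempty_iff.2 ⟨⟨0, hK⟩⟩
    · exact Finset.univ_nonempty_iff.2 ⟨⟨0, hJ⟩⟩
  have key : ∀ y : Fin p → ℝ,
      π y j k * π y j' k' / (π y j k' * π y j' k)
        = Real.exp (∑ m, y m *
            (b j k m + b j' k' m - b j k' m - b j' k m)) := by
    intro y
    have hS' := (hS y).ne'
    simp only [hπ]
    rw [div_mul_div_comm, div_mul_div_comm, div_div_div_cancel_right₀ (mul_ne_zero hS' hS')]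
    rw [← Real.exp_add, ← Real.exp_add, ← Real.exp_sub, ← Finset.sum_add_distrib, ← Finset.sum_add_distrib,
      ← Finset.sum_sub_distrib]
    congr 1
    apply Finset.sum_congr rfl
    intro i _
    ring
  rw [key x, key xt]
  congr 1
  apply Finset.sum_congr rfl
  intro i _
  by_cases h : i = m₀
  · subst h; rw [hcontrast j j' k k', mul_zero, mul_zero]
  · rw [hx i h]
end

section
/- Let n, p ≥ 2 and G be positive integers, let x₁, …, xₙ ∈ ℝ^p, and let Y ∈ ℝ^{n×G} have nonnegative entries with Σ_{g=1}^G Y_{i,g} = 1 for each i. Let D be any real G × q matrix each of whose columns has entries summing to zero (in particular the log-odds constraint matrix). Let λ ≥ 0, γ > 0, and define F(β) = G̃(β) + λ Σ_{m=2}^p ‖Dᵀ(β_{m,:})ᵀ‖₂ + γ Σ_{m=2}^p ‖β_{m,:}‖₂ for β ∈ ℝ^{p×G}, where G̃(β) = −(1/n) Σ_{i=1}^n [ Σ_{g=1}^G Y_{i,g} ⟨x_i, β_{:,g}⟩ − log( Σ_{g=1}^G exp(⟨x_i, β_{:,g}⟩) ) ] and β_{m,:} denotes the m-th row of β. If β̂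 is a global minimizer of F, then for every m ∈ {2, …, p}, the entries of the m-th row of β̂ sum to zero: Σ_{g=1}^G β̂_{m,g} = 0. -/
/-- For the doubly group-penalized multinomial log-likelihood objective in
which each column of `D` sums to zero and `γ > 0`, every global minimizer has
all of its penalized rows (rows `m = 2, …, p`, i.e. all non-intercept rows)
summing to zero. -/
theorem minimizer_rows_sum_zero
    (n p G q : ℕ) (hn : 0 < n) (hp : 2 ≤ p) (hG : 0 < G)
    (x : Fin n → Fin p → ℝ) (Y : Fin n → Fin G → ℝ)
    (hY0 : ∀ i g, 0 ≤ Y i g) (hY1 : ∀ i, ∑ g, Y i g = 1)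
    (D : Matrix (Fin G) (Fin q) ℝ) (hD : ∀ c, ∑ g, D g c = 0)
    (lam γ : ℝ) (hlam : 0 ≤ lam) (hγ : 0 < γ)
    (Gt : (Fin p → Fin G → ℝ) → ℝ)
    (hGt : ∀ β, Gt β = -(1 / (n : ℝ)) * ∑ i,
      ((∑ g, Y i g * ∑ m, x i m * β m g)
        - Real.log (∑ g, Real.exp (∑ m, x i m * β m g))))
    (F : (Fin p → Fin G → ℝ) → ℝ)
    (hF : ∀ β, F β = Gt β
        + lam * ∑ m ∈ Finset.univ.filter (fun m : Fin p => m.val ≠ 0),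
            l2norm (D.transpose.mulVec (β m))
        + γ * ∑ m ∈ Finset.univ.filter (fun m : Fin p => m.val ≠ 0), l2norm (β m))
    (βhat : Fin p → Fin G → ℝ) (hmin : ∀ β, F βhat ≤ F β) :
    ∀ m : Fin p, m.val ≠ 0 → ∑ g, βhat m g = 0 := by
  intro m hm
  by_contra hs0
  haveI : Nonempty (Fin G) := Fin.pos_iff_nonempty.mp hG
  have hGpos : (0 : ℝ) < (G : ℝ) := by exact_mod_cast hG
  set s : ℝ := ∑ g, βhat m g with hsdef
  set c : ℝ := s / G with hcdef
  set β' : Fin p → Fin G → ℝ := Function.update βhat m (fun g => βhat m g - c)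
    with hβ'def
  have hβ'm : β' m = fun g => βhat m g - c := by simp [hβ'def]
  have hβ'ne : ∀ m' : Fin p, m' ≠ m → β' m' = βhat m' := by
    intro m' h; simp [hβ'def, Function.update_of_ne h]
  -- inner products shift by a constant
  have hS : ∀ i g, ∑ m', x i m' * β' m' g
      = (∑ m', x i m' * βhat m' g) - x i m * c := by
    intro i g
    have h1 : ∀ m' ∈ Finset.univ, x i m' * β' m' g
        = x i m' * βhat m' g - (if m' = m then x i m * c else 0) := by
      intro m' _
      by_cases h : m' = m
      · subst h; rw [hβ'm]; simp; ring
      · rw [hβ'ne m' h]; simp [h]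
    rw [Finset.sum_congr rfl h1, Finset.sum_sub_distrib]
    simp
  -- Gt is invariant
  have hGteq : Gt β' = Gt βhat := by
    rw [hGt, hGt]
    congr 1
    apply Finset.sum_congr rfl
    intro i _
    have h1 : ∑ g, Y i g * ∑ m', x i m' * β' m' g
        = (∑ g, Y i g * ∑ m', x i m' * βhat m' g) - x i m * c := by
      have h2 : ∀ g ∈ Finset.univ, Y i g * ∑ m', x i m' * β' m' g
          = Y i g * ∑ m', x i m' * βhat m' g - (x i m * c) * Y i g := by
        intro g _; rw [hS]; ring
      rw [Finset.sum_congr rfl h2, Finset.sum_sub_distrib, ← Finset.mul_sum,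
        hY1, mul_one]
    have hpos : 0 < ∑ g, Real.exp (∑ m', x i m' * βhat m' g) :=
      Finset.sum_pos (fun g _ => Real.exp_pos _) Finset.univ_nonempty
    have hexp : ∑ g, Real.exp (∑ m', x i m' * β' m' g)
        = (∑ g, Real.exp (∑ m', x i m' * βhat m' g)) * Real.exp (-(x i m * c)) := by
      rw [Finset.sum_mul]
      apply Finset.sum_congr rfl
      intro g _
      rw [hS, sub_eq_add_neg, Real.exp_add]
    have h2 : Real.log (∑ g, Real.exp (∑ m', x i m' * β' m' g))
        = Real.log (∑ g, Real.exp (∑ m', x i m' * βhat m' g)) - x i m * c := by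
      rw [hexp, Real.log_mul (ne_of_gt hpos) (Real.exp_ne_zero _), Real.log_exp]
      ring
    rw [h1, h2]; ring
  -- D-penalty is invariant
  have hD' : ∀ m' ∈ Finset.univ.filter (fun m : Fin p => m.val ≠ 0),
      l2norm (D.transpose.mulVec (β' m')) = l2norm (D.transpose.mulVec (βhat m')) := by
    intro m' _
    by_cases h : m' = m
    · subst h
      congr 1
      funext c'
      simp only [Matrix.mulVec, Matrix.transpose_apply, dotProduct, hβ'm]
      have h3 : ∀ g ∈ Finset.univ, D g c' * (βhat m' g - c)
          = D g c' * βhat m' g - c * D g c' := by intro g _; ring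
      rw [Finset.sum_congr rfl h3, Finset.sum_sub_distrib, ← Finset.mul_sum,
        hD c', mul_zero, sub_zero]
    · rw [hβ'ne m' h]
  have hDeq : ∑ m' ∈ Finset.univ.filter (fun m : Fin p => m.val ≠ 0),
      l2norm (D.transpose.mulVec (β' m'))
      = ∑ m' ∈ Finset.univ.filter (fun m : Fin p => m.val ≠ 0),
      l2norm (D.transpose.mulVec (βhat m')) := Finset.sum_congr rfl hD'
  -- strict decrease of the row norm
  have hsum2 : ∑ g, (βhat m g - c) ^ 2 = (∑ g, (βhat m g) ^ 2) - s ^ 2 / G := by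
    have h4 : ∀ g ∈ Finset.univ, (βhat m g - c) ^ 2
        = (βhat m g) ^ 2 - (2 * c) * βhat m g + c ^ 2 := by intro g _; ring
    rw [Finset.sum_congr rfl h4, Finset.sum_add_distrib, Finset.sum_sub_distrib,
      ← Finset.mul_sum, Finset.sum_const, Finset.card_univ, Fintype.card_fin,
      nsmul_eq_mul, ← hsdef, hcdef]
    field_simp
    ring
  have hs2 : 0 < s ^ 2 :=
    lt_of_le_of_ne (sq_nonneg s) (fun h => hs0 (pow_eq_zero_iff (by norm_num) |>.mp h.symm))
  have hlt : l2norm (β' m) < l2norm (βhat m) := by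
    rw [hβ'm]
    unfold l2norm
    apply Real.sqrt_lt_sqrt (Finset.sum_nonneg fun g _ => sq_nonneg _)
    rw [hsum2]
    have h5 : 0 < s ^ 2 / G := div_pos hs2 hGpos
    linarith
  have hγsum : ∑ m' ∈ Finset.univ.filter (fun m : Fin p => m.val ≠ 0), l2norm (β' m')
      < ∑ m' ∈ Finset.univ.filter (fun m : Fin p => m.val ≠ 0), l2norm (βhat m') := by
    apply Finset.sum_lt_sum
    · intro m' _
      by_cases h : m' = m
      · subst h; exact le_of_lt hlt
      · rw [hβ'ne m' h]
    · exact ⟨m, Finset.mem_filter.mpr ⟨Finset.mem_univ m, hm⟩, hlt⟩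
  have hFlt : F β' < F βhat := by
    rw [hF, hF, hGteq, hDeq]
    exact (add_lt_add_iff_left _).mpr (mul_lt_mul_of_pos_left hγsum hγ)
  exact absurd (hmin β') (not_le.mpr hFlt)
end
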